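/- Let (G, H, Γ) be a cut-and-project scheme, with G and H each carrying a right-invariant, proper metric compatible with the topology, and let W ⊆ H be a nonempty, relatively compact, Γ-regular window with model set Λ := π_G((G × W) ∩ Γ). Then for every r > 0, the number of equivalence classes of the relation ∼_r on Λ is at most the number of connected components of W \ ⋃_{μ ∈ S_r} μ·∂W, where S_r := π_H({(γ, μ) ∈ Γ : |γ| < r, μ ∈ WW⁻¹}) is the r-slab. -/

import Mathlib

open Pointwise

universe u

variable {G H : Type u}

/-- The cut-and-project set `Λ = π_G((G × W) ∩ Γ)`. -/
def modelSet [Group G] [Group H] (Γ : Subgroup (G × H)) (W : Set H) : Set G :=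
  Prod.fst '' ((Set.univ ×ˢ W) ∩ (Γ : Set (G × H)))

/-- The `r`-slab `S_r = π_H({(γ, μ) ∈ Γ : |γ| < r, μ ∈ WW⁻¹})`. -/
def slab [Group G] [Group H] [MetricSpace G] (Γ : Subgroup (G × H)) (W : Set H)
    (r : ℝ) : Set H :=
  Prod.snd '' {p : G × H | p ∈ (Γ : Set (G × H)) ∧ dist p.1 1 < r ∧ p.2 ∈ W * W⁻¹}

/-- `l ∼_r m` iff `P_r(l)·l⁻¹ = P_r(m)·m⁻¹`, where `P_r(x) = B_r(x) ∩ Λ`. -/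
def patchEquiv [Group G] [MetricSpace G] (Λ : Set G) (r : ℝ) (l m : G) : Prop :=
  (Metric.ball l r ∩ Λ) * ({l⁻¹} : Set G) = (Metric.ball m r ∩ Λ) * ({m⁻¹} : Set G)

/-- For a cut-and-project scheme `(G, H, Γ)` with nonempty, relatively
compact, `Γ`-regular window `W` and model set `Λ`: for every `r > 0` the number of equivalence
classes of `∼_r` on `Λ` is at most the number of connected components of
`W \ ⋃_{μ ∈ S_r} μ·∂W`. -/
theorem card_patch_classes_le_card_components
    [Group G] [MetricSpace G] [IsTopologicalGroup G] [ProperSpace G] [SecondCountableTopology G]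
    [Group H] [MetricSpace H] [IsTopologicalGroup H] [ProperSpace H] [SecondCountableTopology H]
    (hinvG : ∀ x y g : G, dist (x * g) (y * g) = dist x y)
    (hinvH : ∀ x y g : H, dist (x * g) (y * g) = dist x y)
    (Γ : Subgroup (G × H)) [DiscreteTopology Γ]
    (hcocompact : ∃ C : Set (G × H), IsCompact C ∧ C * (Γ : Set (G × H)) = Set.univ)
    (hinj : Set.InjOn Prod.fst (Γ : Set (G × H)))
    (hdense : Dense (Prod.snd '' (Γ : Set (G × H))))
    (W : Set H) (hWne : W.Nonempty) (hWrc : IsCompact (closure W))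
    (hWreg : frontier W ∩ (Prod.snd '' (Γ : Set (G × H))) = ∅)
    (r : ℝ) (hr : 0 < r) :
    Cardinal.mk ↥{A : Set G | ∃ l ∈ modelSet Γ W,
        A = {m : G | m ∈ modelSet Γ W ∧ patchEquiv (modelSet Γ W) r l m}}
      ≤ Cardinal.mk (ConnectedComponents ↥(W \ ⋃ μ ∈ slab Γ W r, μ • frontier W)) := by
  classical
  set Λ := modelSet Γ W with hΛdef
  set W' : Set H := W \ ⋃ μ ∈ slab Γ W r, μ • frontier W with hW'def
  -- every element of Λ has a lift in Γ with second coordinate in W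
  have hstar : ∀ l ∈ Λ, ∃ h : H, (l, h) ∈ Γ ∧ h ∈ W := by
    intro l hl
    obtain ⟨p, ⟨hpW, hpΓ⟩, rfl⟩ := hl
    exact ⟨p.2, by simpa using hpΓ, hpW.2⟩
  -- Γ_H avoids all translates μ • frontier W for μ ∈ slab
  have hmemW' : ∀ p : G × H, p ∈ Γ → p.2 ∈ W → p.2 ∈ W' := by
    intro p hp hpW
    refine ⟨hpW, ?_⟩
    intro hmem
    rw [Set.mem_iUnion₂] at hmem
    obtain ⟨μ, hμ, hx⟩ := hmem
    obtain ⟨q, ⟨hqΓ, -, -⟩, rfl⟩ := hμ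
    rw [Set.mem_smul_set] at hx
    obtain ⟨y, hy, hyx⟩ := hx
    have hy' : q.2⁻¹ * p.2 ∈ frontier W := by
      have : y = q.2⁻¹ * p.2 := by
        rw [← hyx, smul_eq_mul]; group
      rwa [this] at hy
    have hΓH : q.2⁻¹ * p.2 ∈ Prod.snd '' (Γ : Set (G × H)) :=
      ⟨q⁻¹ * p, mul_mem (inv_mem hqΓ) hp, rfl⟩
    exact Set.eq_empty_iff_forall_notMem.mp hWreg _ ⟨hy', hΓH⟩
  -- clopen sets from slab elements
  have hclopen : ∀ k : H, k⁻¹ ∈ slab Γ W r → IsClopen {x : ↥W' | k * (x : H) ∈ W} := by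
    intro k hk
    have hf : Continuous fun x : ↥W' => k * (x : H) := continuous_const.mul continuous_subtype_val
    have hnotf : ∀ x : ↥W', k * (x : H) ∉ frontier W := by
      intro x hx
      refine x.2.2 ?_
      rw [Set.mem_iUnion₂]
      refine ⟨k⁻¹, hk, ?_⟩
      rw [Set.mem_smul_set]
      exact ⟨k * (x : H), hx, by rw [smul_eq_mul]; group⟩
    have h1 : {x : ↥W' | k * (x : H) ∈ W} = (fun x : ↥W' => k * (x : H)) ⁻¹' interior W := by
      ext x
      constructor
      · intro hx
        have : k * (x : H) ∈ closure W \ frontier W := ⟨subset_closure hx, hnotf x⟩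
        rwa [closure_diff_frontier] at this
      · exact fun hx => (interior_subset hx : k * (x : H) ∈ W)
    have h2 : {x : ↥W' | k * (x : H) ∈ W} = (fun x : ↥W' => k * (x : H)) ⁻¹' closure W := by
      ext x
      constructor
      · exact fun hx => subset_closure hx
      · intro hx
        have h3 : k * (x : H) ∈ closure W \ frontier W := ⟨hx, hnotf x⟩
        rw [closure_diff_frontier] at h3
        exact (interior_subset h3 : k * (x : H) ∈ W)
    exact ⟨h2 ▸ isClosed_closure.preimage hf, h1 ▸ isOpen_interior.preimage hf⟩
  -- transport across connected components
  have hdir : ∀ x y : ↥W', ConnectedComponents.mk x = ConnectedComponents.mk y →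
      ∀ (g : G) (k : H), (g, k) ∈ Γ → dist g 1 < r → k * (x : H) ∈ W → k * (y : H) ∈ W := by
    intro x y hxy g k hgk hd hkx
    have hslab : k⁻¹ ∈ slab Γ W r := by
      refine ⟨(g⁻¹, k⁻¹), ⟨?_, ?_, ?_⟩, rfl⟩
      · have : (g⁻¹, k⁻¹) = (g, k)⁻¹ := rfl
        rw [this]; exact inv_mem hgk
      · have h1 : dist (g⁻¹ * g) (1 * g) = dist g⁻¹ 1 := hinvG g⁻¹ 1 g
        simp only [inv_mul_cancel, one_mul] at h1
        rwa [← h1, dist_comm]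
      · rw [Set.mem_mul]
        refine ⟨(x : H), x.2.1, (k * (x : H))⁻¹, ?_, by group⟩
        rw [Set.mem_inv, inv_inv]; exact hkx
    have hS := hclopen k hslab
    have hsub := hS.connectedComponent_subset (x := x) hkx
    rw [ConnectedComponents.coe_eq_coe] at hxy
    have : y ∈ connectedComponent x := hxy ▸ mem_connectedComponent
    exact hsub this
  -- the patch set description
  have hpatch : ∀ (l : G) (h : H), (l, h) ∈ Γ →
      (Metric.ball l r ∩ Λ) * ({l⁻¹} : Set G)
        = {g : G | ∃ k : H, (g, k) ∈ Γ ∧ dist g 1 < r ∧ k * h ∈ W} := by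
    intro l h hlΓ
    ext g
    rw [Set.mem_mul]
    constructor
    · rintro ⟨m, ⟨hmball, hmΛ⟩, z, hz, rfl⟩
      rw [Set.mem_singleton_iff] at hz
      subst hz
      obtain ⟨hm, hmΓ, hmW⟩ := hstar m hmΛ
      refine ⟨hm * h⁻¹, ?_, ?_, by simpa using hmW⟩
      · have : (m * l⁻¹, hm * h⁻¹) = (m, hm) * (l, h)⁻¹ := rfl
        rw [this]; exact mul_mem hmΓ (inv_mem hlΓ)
      · have h1 : dist (m * l⁻¹ * l) (1 * l) = dist (m * l⁻¹) 1 := hinvG (m * l⁻¹) 1 l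
        simp only [inv_mul_cancel_right, one_mul] at h1
        rw [← h1]
        exact Metric.mem_ball.mp hmball
    · rintro ⟨k, hkΓ, hd, hkh⟩
      refine ⟨g * l, ⟨?_, ?_⟩, l⁻¹, rfl, by group⟩
      · rw [Metric.mem_ball]
        have h1 : dist (g * l) (1 * l) = dist g 1 := hinvG g 1 l
        rw [one_mul] at h1
        rwa [h1]
      · refine ⟨(g * l, k * h), ⟨⟨trivial, hkh⟩, ?_⟩, rfl⟩
        have : (g * l, k * h) = (g, k) * (l, h) := rfl
        rw [this]; exact mul_mem hkΓ hlΓ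
  -- the main lemma
  have hmain : ∀ (l m : G) (hl hm : H) (hlΓ : (l, hl) ∈ Γ) (hmΓ : (m, hm) ∈ Γ)
      (hl' : hl ∈ W') (hm' : hm ∈ W'),
      ConnectedComponents.mk (⟨hl, hl'⟩ : ↥W') = ConnectedComponents.mk ⟨hm, hm'⟩ →
      patchEquiv Λ r l m := by
    intro l m hl hm hlΓ hmΓ hl' hm' hcc
    unfold patchEquiv
    rw [hpatch l hl hlΓ, hpatch m hm hmΓ]
    ext g
    simp only [Set.mem_setOf_eq]
    constructor
    · rintro ⟨k, h1, h2, h3⟩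
      exact ⟨k, h1, h2, hdir ⟨hl, hl'⟩ ⟨hm, hm'⟩ hcc g k h1 h2 h3⟩
    · rintro ⟨k, h1, h2, h3⟩
      exact ⟨k, h1, h2, hdir ⟨hm, hm'⟩ ⟨hl, hl'⟩ hcc.symm g k h1 h2 h3⟩
  -- construct the injection
  set C := {A : Set G | ∃ l ∈ Λ, A = {m : G | m ∈ Λ ∧ patchEquiv Λ r l m}} with hCdef
  have hchoose : ∀ A : ↥C, ∃ (l : G) (h : H), (l, h) ∈ Γ ∧ h ∈ W ∧
      (A : Set G) = {m : G | m ∈ Λ ∧ patchEquiv Λ r l m} := by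
    intro A
    obtain ⟨l, hlΛ, hA⟩ := A.2
    obtain ⟨h, hΓ, hW⟩ := hstar l hlΛ
    exact ⟨l, h, hΓ, hW, hA⟩
  choose lf hf hΓf hWf hAf using hchoose
  have hW'f : ∀ A : ↥C, hf A ∈ W' := fun A => hmemW' (lf A, hf A) (hΓf A) (hWf A)
  have hinjf : Function.Injective
      (fun A : ↥C => ConnectedComponents.mk (⟨hf A, hW'f A⟩ : ↥W')) := by
    intro A B hAB
    have hpe : patchEquiv Λ r (lf A) (lf B) :=
      hmain (lf A) (lf B) (hf A) (hf B) (hΓf A) (hΓf B) (hW'f A) (hW'f B) hAB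
    apply Subtype.ext
    rw [hAf A, hAf B]
    ext m
    simp only [Set.mem_setOf_eq]
    unfold patchEquiv at hpe ⊢
    constructor
    · rintro ⟨h1, h2⟩; exact ⟨h1, hpe ▸ h2⟩
    · rintro ⟨h1, h2⟩; exact ⟨h1, hpe.trans h2⟩
  exact Cardinal.mk_le_of_injective hinjf
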